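/- In the polynomial ring K[x_1, x_2] in two variables, a nonempty finite set V of monomials of degree d with gcd(V) = 1 is a Gotzmann set if and only if V = M^d, the set of all monomials of degree d. -/
import Mathlib


open Finset

/-- Monomials of `K[x_1,…,x_n]` are encoded as exponent vectors `Fin n → ℕ`.
`mulVarsOn S W = {x_j · w : w ∈ W, j ∈ S}`. -/
def mulVarsOn {n : ℕ} (S : Finset (Fin n)) (W : Finset (Fin n → ℕ)) :
    Finset (Fin n → ℕ) :=
  W.biUnion fun v => S.image fun j => v + Pi.single j 1

/-- `MV = {x_j · v : v ∈ V, 1 ≤ j ≤ n}`. -/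
def mulVars {n : ℕ} (W : Finset (Fin n → ℕ)) : Finset (Fin n → ℕ) :=
  mulVarsOn Finset.univ W

/-- `IsBinRep m h p f` says that `h = ∑_{j=p}^{m} C(f j + j, j)` is the `m`-th
binomial representation of `h`: `1 ≤ p ≤ m` and `f` is weakly increasing on `[p,m]`. -/
def IsBinRep (m h p : ℕ) (f : ℕ → ℕ) : Prop :=
  1 ≤ p ∧ p ≤ m ∧ (∀ j k, p ≤ j → j ≤ k → k ≤ m → f j ≤ f k) ∧
    h = ∑ j ∈ Finset.Icc p m, Nat.choose (f j + j) j

/-- `h^{<m>} = ∑_{j=p}^{m} C(f j + j + 1, j)` for the `m`-th binomial representation `(p, f)`. -/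
def upVal (m p : ℕ) (f : ℕ → ℕ) : ℕ :=
  ∑ j ∈ Finset.Icc p m, Nat.choose (f j + j + 1) j

/-- `h_{<<m>>} = ∑_{j=p}^{m} C(f j + j - 1, j - 1)` for the `m`-th binomial representation `(p, f)`. -/
def downVal (m p : ℕ) (f : ℕ → ℕ) : ℕ :=
  ∑ j ∈ Finset.Icc p m, Nat.choose (f j + j - 1) (j - 1)

/-- `W` is a Gotzmann set with respect to the set of variables `S`:
either `W = ∅`, or (in at most one variable) `|SW| = |W|`, or
`|SW| = |W|^{<|S|-1>}` computed from the `(|S|-1)`-th binomial representation of `|W|`. -/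
def IsGotzmannOn {n : ℕ} (S : Finset (Fin n)) (W : Finset (Fin n → ℕ)) : Prop :=
  W = ∅ ∨ (S.card ≤ 1 ∧ (mulVarsOn S W).card = W.card) ∨
    ∃ p f, IsBinRep (S.card - 1) W.card p f ∧
      (mulVarsOn S W).card = upVal (S.card - 1) p f

/-- `V` is a Gotzmann set of monomials of `K[x_1,…,x_n]`: `|MV| = |V|^{<n-1>}`. -/
def IsGotzmann {n : ℕ} (W : Finset (Fin n → ℕ)) : Prop :=
  IsGotzmannOn Finset.univ W

/-- The exponent vector of `gcd(V)` (pointwise minimum of the exponent vectors). -/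
noncomputable def gcdMon {n : ℕ} (V : Finset (Fin n → ℕ)) : Fin n → ℕ :=
  fun j => sInf ((fun v => v j) '' (V : Set (Fin n → ℕ)))

/-- `w` comes strictly earlier than `v` in the lexicographic order on monomials
(`x_1 > x_2 > … > x_n`, larger exponent vector comes earlier). -/
def lexEarlier {n : ℕ} (w v : Fin n → ℕ) : Prop :=
  ∃ i : Fin n, (∀ j, j < i → w j = v j) ∧ v i < w i

/-- `V` is a lexsegment set of monomials of degree `d`: an initial segment of
the monomials of degree `d` in lexicographic order. -/
def IsLexSegment (n d : ℕ) (V : Finset (Fin n → ℕ)) : Prop :=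
  (∀ v ∈ V, ∑ j, v j = d) ∧
    ∀ v ∈ V, ∀ w : Fin n → ℕ, (∑ j, w j = d) → lexEarlier w v → w ∈ V

/-- `V` is strongly stable: for `u ∈ V`, `i < j` with `x_j ∣ u`, also `(x_i/x_j)·u ∈ V`. -/
def IsStronglyStable {n : ℕ} (V : Finset (Fin n → ℕ)) : Prop :=
  ∀ u ∈ V, ∀ i j : Fin n, i < j → 0 < u j →
    (u + Pi.single i 1 - Pi.single j 1) ∈ V

/-- `u` is a fixed empty element of `V` (of degree `d`) for `i`: no monomial of
degree `d` which is under `u` for `i` (all exponents except possibly the `i`-th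
bounded by those of `u`) belongs to `V`. -/
def IsFEE (n d : ℕ) (V : Finset (Fin n → ℕ)) (i : Fin n) (u : Fin n → ℕ) : Prop :=
  u ∉ V ∧ ∀ v : Fin n → ℕ, (∑ j, v j = d) → (∀ j, j ≠ i → v j ≤ u j) → v ∉ V

-- helpers
lemma mem_mulVars_two (V : Finset (Fin 2 → ℕ)) (w : Fin 2 → ℕ) :
    w ∈ mulVars V ↔ ∃ v ∈ V, w = v + Pi.single 0 1 ∨ w = v + Pi.single 1 1 := by
  simp only [mulVars, mulVarsOn, Finset.mem_biUnion, Finset.mem_image, Finset.mem_univ,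
    true_and]
  constructor
  · rintro ⟨v, hv, j, hj⟩
    refine ⟨v, hv, ?_⟩
    fin_cases j
    · left; exact hj.symm
    · right; exact hj.symm
  · rintro ⟨v, hv, h | h⟩
    · exact ⟨v, hv, 0, h.symm⟩
    · exact ⟨v, hv, 1, h.symm⟩

lemma card_image_first (e : ℕ) (W : Finset (Fin 2 → ℕ)) (h : ∀ v ∈ W, ∑ j, v j = e) :
    (W.image fun v => v 0).card = W.card := by
  apply Finset.card_image_of_injOn
  intro u hu w hw huv
  have huv' : u 0 = w 0 := huv
  have h1 := h u hu
  have h2 := h w hw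
  rw [Fin.sum_univ_two] at h1 h2
  have h3 : u 1 = w 1 := by clear huv; omega
  funext j
  fin_cases j
  · exact huv'
  · exact h3

lemma sum_add_single (v : Fin 2 → ℕ) (j : Fin 2) :
    ∑ k, (v + Pi.single j 1 : Fin 2 → ℕ) k = (∑ k, v k) + 1 := by
  simp [Finset.sum_add_distrib, Finset.sum_pi_single']

-- interval lemma on ℕ finsets
lemma interval_of_card (A : Finset ℕ) (d : ℕ) (h0 : 0 ∈ A) (hd : d ∈ A)
    (hsub : ∀ a ∈ A, a ≤ d)
    (hcard : (A ∪ A.image (· + 1)).card = A.card + 1) :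
    A = Finset.Icc 0 d := by
  have hnotmem : d + 1 ∉ A := fun h => by have := hsub _ h; omega
  have hins : insert (d + 1) A ⊆ A ∪ A.image (· + 1) := by
    intro x hx
    rcases Finset.mem_insert.mp hx with h | h
    · exact Finset.mem_union_right _ (Finset.mem_image.mpr ⟨d, hd, h.symm⟩)
    · exact Finset.mem_union_left _ h
  have hcard' : (insert (d + 1) A).card = A.card + 1 := Finset.card_insert_of_notMem hnotmem
  have heq : A ∪ A.image (· + 1) = insert (d + 1) A :=
    (Finset.eq_of_subset_of_card_le hins (by omega)).symm
  have hsucc : ∀ a ∈ A, a < d → a + 1 ∈ A := by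
    intro a ha hlt
    have : a + 1 ∈ A ∪ A.image (· + 1) :=
      Finset.mem_union_right _ (Finset.mem_image.mpr ⟨a, ha, rfl⟩)
    rw [heq] at this
    rcases Finset.mem_insert.mp this with h | h
    · omega
    · exact h
  have hall : ∀ k, k ≤ d → k ∈ A := by
    intro k
    induction k with
    | zero => intro _; exact h0
    | succ m ih => intro hm; exact hsucc m (ih (by omega)) (by omega)
  apply Finset.eq_of_subset_of_card_le
  · intro a ha; simpa using hsub a ha
  · rw [Nat.card_Icc]
    have : Finset.Icc 0 d ⊆ A := fun k hk => hall k (by simpa using hk)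
    have := Finset.card_le_card this
    rw [Nat.card_Icc] at this
    omega

lemma image_mulVars_eq (V : Finset (Fin 2 → ℕ)) :
    (mulVars V).image (fun v => v 0) = (V.image fun v => v 0) ∪
      ((V.image fun v => v 0).image (· + 1)) := by
  ext b
  simp only [Finset.mem_image, Finset.mem_union]
  constructor
  · rintro ⟨w, hw, rfl⟩
    rcases (mem_mulVars_two V w).mp hw with ⟨v, hv, rfl | rfl⟩
    · right; exact ⟨v 0, ⟨v, hv, rfl⟩, by simp⟩
    · left; exact ⟨v, hv, by simp⟩
  · rintro (⟨v, hv, rfl⟩ | ⟨a, ⟨v, hv, rfl⟩, rfl⟩)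
    · exact ⟨v + Pi.single 1 1, (mem_mulVars_two V _).mpr ⟨v, hv, Or.inr rfl⟩, by simp⟩
    · exact ⟨v + Pi.single 0 1, (mem_mulVars_two V _).mpr ⟨v, hv, Or.inl rfl⟩, by simp⟩

lemma isGotzmann_iff (V : Finset (Fin 2 → ℕ)) (hne : V.Nonempty) :
    IsGotzmann V ↔ (mulVars V).card = V.card + 1 := by
  have hcu : (Finset.univ : Finset (Fin 2)).card = 2 := by simp
  constructor
  · rintro (h | ⟨h, _⟩ | ⟨p, f, ⟨hp1, hpm, _, hsum⟩, hup⟩)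
    · exact absurd h (Finset.nonempty_iff_ne_empty.mp hne)
    · rw [hcu] at h; omega
    · rw [hcu] at hpm hsum hup
      have hp : p = 1 := by omega
      subst hp
      simp only [Finset.Icc_self, Finset.sum_singleton, Nat.choose_one_right] at hsum
      rw [upVal] at hup
      simp only [Finset.Icc_self, Finset.sum_singleton, Nat.choose_one_right] at hup
      rw [mulVars] at *
      omega
  · intro h
    right; right
    refine ⟨1, fun _ => V.card - 1, ⟨le_refl 1, by rw [hcu], fun _ _ _ _ _ => le_refl _, ?_⟩, ?_⟩
    · rw [hcu]
      simp only [Finset.Icc_self, Finset.sum_singleton, Nat.choose_one_right]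
      have := Finset.card_pos.mpr hne
      omega
    · rw [hcu, upVal]
      simp only [Finset.Icc_self, Finset.sum_singleton, Nat.choose_one_right]
      have := Finset.card_pos.mpr hne
      rw [mulVars] at h
      omega

theorem gotzmann_two_vars (d : ℕ) (V : Finset (Fin 2 → ℕ)) (hne : V.Nonempty)
    (hdeg : ∀ v ∈ V, ∑ j, v j = d) (hgcd : gcdMon V = 0) :
    IsGotzmann V ↔ ∀ v : Fin 2 → ℕ, (∑ j, v j = d) → v ∈ V := by
  set A := V.image fun v => v 0 with hA
  have hcardA : A.card = V.card := card_image_first d V hdeg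
  -- gcd conditions
  have hgcd0 : ∃ v ∈ V, v 0 = 0 := by
    have h := congrFun hgcd 0
    simp only [gcdMon, Pi.zero_apply] at h
    rcases (Nat.sInf_eq_zero.mp h) with h | h
    · obtain ⟨v, hv, hv0⟩ := h; exact ⟨v, hv, hv0⟩
    · exfalso
      obtain ⟨v, hv⟩ := hne
      exact Set.eq_empty_iff_forall_notMem.mp h (v 0) ⟨v, by simpa using hv, rfl⟩
  have hgcd1 : ∃ v ∈ V, v 1 = 0 := by
    have h := congrFun hgcd 1
    simp only [gcdMon, Pi.zero_apply] at h
    rcases (Nat.sInf_eq_zero.mp h) with h | h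
    · obtain ⟨v, hv, hv0⟩ := h; exact ⟨v, hv, hv0⟩
    · exfalso
      obtain ⟨v, hv⟩ := hne
      exact Set.eq_empty_iff_forall_notMem.mp h (v 1) ⟨v, by simpa using hv, rfl⟩
  have h0A : 0 ∈ A := by
    obtain ⟨v, hv, hv0⟩ := hgcd0
    exact Finset.mem_image.mpr ⟨v, hv, hv0⟩
  have hdA : d ∈ A := by
    obtain ⟨v, hv, hv1⟩ := hgcd1
    have := hdeg v hv
    rw [Fin.sum_univ_two] at this
    exact Finset.mem_image.mpr ⟨v, hv, by omega⟩
  have hsubA : ∀ a ∈ A, a ≤ d := by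
    intro a ha
    obtain ⟨v, hv, rfl⟩ := Finset.mem_image.mp ha
    have := hdeg v hv
    rw [Fin.sum_univ_two] at this
    omega
  have hdegM : ∀ w ∈ mulVars V, ∑ j, w j = d + 1 := by
    intro w hw
    rcases (mem_mulVars_two V w).mp hw with ⟨v, hv, rfl | rfl⟩ <;>
      rw [sum_add_single, hdeg v hv]
  have hcardM : (mulVars V).card = (A ∪ A.image (· + 1)).card := by
    rw [← card_image_first (d + 1) (mulVars V) hdegM, image_mulVars_eq]
  rw [isGotzmann_iff V hne]
  constructor
  · intro h v hv
    have hAeq : A = Finset.Icc 0 d :=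
      interval_of_card A d h0A hdA hsubA (by omega)
    have hv0 : v 0 ∈ A := by
      rw [hAeq]
      rw [Fin.sum_univ_two] at hv
      simp; omega
    obtain ⟨u, hu, hu0⟩ := Finset.mem_image.mp hv0
    have h1 := hdeg u hu
    rw [Fin.sum_univ_two] at h1
    rw [Fin.sum_univ_two] at hv
    have h2 : u 1 = v 1 := by omega
    have huveq : u = v := by
      funext j
      fin_cases j
      · exact hu0
      · exact h2
    rwa [← huveq]
  · intro hall
    have hAeq : A = Finset.Icc 0 d := by
      apply Finset.Subset.antisymm
      · intro a ha; simpa using hsubA a ha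
      · intro a ha
        simp only [Finset.mem_Icc] at ha
        refine Finset.mem_image.mpr ⟨![a, d - a], hall _ ?_, by simp⟩
        rw [Fin.sum_univ_two]
        simp; omega
    have hunion : A ∪ A.image (· + 1) = Finset.Icc 0 (d + 1) := by
      rw [hAeq]
      ext b
      simp only [Finset.mem_union, Finset.mem_image, Finset.mem_Icc]
      constructor
      · rintro (h | ⟨a, ha, rfl⟩) <;> omega
      · rintro ⟨_, hb⟩
        rcases Nat.lt_or_ge b (d + 1) with h | h
        · left; omega
        · right; exact ⟨d, by omega, by omega⟩
    have : A.card = d + 1 := by rw [hAeq, Nat.card_Icc]; omega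
    rw [hcardM, hunion, Nat.card_Icc]
    simp only [Nat.sub_zero]
    omega
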